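/- Let G, H be finite digraphs and ξ ∈ H(G,H) a homomorphism. Then for every finite digraph H', the number of homomorphisms ζ ∈ H(G,H') with G_ζ = G_ξ equals the number of strict homomorphisms from G_ξ to H', i.e., #Θ_{G,H'}(ξ) = #S(G_ξ, H'). -/

import Mathlib

/-- A homomorphism between digraphs `(V, A)` and `(W, B)`:
a map sending every arc to an arc. -/
def IsHom {V W : Type} (A : V → V → Prop) (B : W → W → Prop) (f : V → W) : Prop :=
  ∀ ⦃v w : V⦄, A v w → B (f v) (f w)

/-- A strict homomorphism: a homomorphism mapping proper arcs to proper arcs. -/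
def IsStrictHom {V W : Type} (A : V → V → Prop) (B : W → W → Prop) (f : V → W) : Prop :=
  IsHom A B f ∧ ∀ ⦃v w : V⦄, A v w → v ≠ w → f v ≠ f w

/-- Adjacency in a digraph. -/
def DAdj {V : Type} (A : V → V → Prop) (v w : V) : Prop := A v w ∨ A w v

/-- `v` and `w` are connected in `X`: `v = w` (with `v ∈ X`), or there is a line
`z 0, …, z I` inside `X` connecting them, consecutive members being adjacent. -/
def ConnIn {V : Type} (A : V → V → Prop) (X : Set V) (v w : V) : Prop :=
  ∃ (I : ℕ) (z : ℕ → V), z 0 = v ∧ z I = w ∧ (∀ i ≤ I, z i ∈ X) ∧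
    ∀ i < I, DAdj A (z i) (z (i + 1))

/-- `γ_X(v)`: the set of `w ∈ X` connected with `v` in `X`. -/
def gammaSet {V : Type} (A : V → V → Prop) (X : Set V) (v : V) : Set V :=
  {w | ConnIn A X v w}

/-- `Γ_ξ(v)`: the connectivity component of `v` in the preimage `ξ⁻¹(ξ(v))`. -/
def GammaComp {V W : Type} (A : V → V → Prop) (ξ : V → W) (v : V) : Set V :=
  gammaSet A {u | ξ u = ξ v} v

/-- The set of homomorphisms `H(G,H)` (as a type). -/
def HomSet {V W : Type} (A : V → V → Prop) (B : W → W → Prop) : Type :=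
  {f : V → W // IsHom A B f}

/-- The set of strict homomorphisms `S(G,H)` (as a type). -/
def StrictHomSet {V W : Type} (A : V → V → Prop) (B : W → W → Prop) : Type :=
  {f : V → W // IsStrictHom A B f}

/-- The vertex set of the digraph `G_ξ`: the components `Γ_ξ(v)`, `v ∈ V(G)`. -/
def GVert {V W : Type} (A : V → V → Prop) (ξ : V → W) : Type :=
  {C : Set V // ∃ v, C = GammaComp A ξ v}

/-- The arc relation of the digraph `G_ξ`. -/
def GArc {V W : Type} (A : V → V → Prop) (ξ : V → W) :
    GVert A ξ → GVert A ξ → Prop :=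
  fun C D => ∃ a ∈ C.1, ∃ b ∈ D.1, A a b

/-- The canonical map `π_ξ : G → G_ξ`, `v ↦ Γ_ξ(v)`. -/
def piMap {V W : Type} (A : V → V → Prop) (ξ : V → W) (v : V) : GVert A ξ :=
  ⟨GammaComp A ξ v, v, rfl⟩

/-- `Θ_{G,H'}(ξ)`: the homomorphisms `ζ : G → H'` with `G_ζ = G_ξ`
(equality of the digraphs `G_ζ` and `G_ξ`, i.e. of their vertex sets,
which determines the arc sets). -/
def ThetaSet {V W W' : Type} (A : V → V → Prop) (B' : W' → W' → Prop)
    (ξ : V → W) : Set (V → W') :=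
  {ζ | IsHom A B' ζ ∧
    {C : Set V | ∃ v, C = GammaComp A ζ v} = {C : Set V | ∃ v, C = GammaComp A ξ v}}

/-- `R ⊑_Γ S` with respect to a class `D'` of finite digraphs: a strong Γ-scheme
from `R` to `S` exists, i.e. for every finite digraph `G ∈ D'` an injective map
`ρ_G : H(G,R) → H(G,S)` with `Γ_{ρ_G(ξ)}(v) = Γ_ξ(v)` for all `ξ`, `v`. -/
def SqGamma (D' : (V : Type) → (V → V → Prop) → Prop)
    {VR VS : Type} (R : VR → VR → Prop) (S : VS → VS → Prop) : Prop :=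
  ∀ (V : Type) [Finite V] [Nonempty V] (A : V → V → Prop), D' V A →
    ∃ ρ : HomSet A R → HomSet A S, Function.Injective ρ ∧
      ∀ (ξ : HomSet A R) (v : V), GammaComp A (ρ ξ).1 v = GammaComp A ξ.1 v

/-- The class `T_a`: digraphs whose loop-removed digraph is acyclic,
i.e. every closed walk is trivial. -/
def Ta {V : Type} (A : V → V → Prop) : Prop :=
  ∀ (z : ℕ → V) (I : ℕ), 0 < I →
    (∀ i < I, A (z i) (z (i + 1)) ∧ z i ≠ z (i + 1)) → z 0 ≠ z I

/-- A poset: a reflexive, antisymmetric, transitive digraph. -/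
def IsPosetRel {V : Type} (A : V → V → Prop) : Prop :=
  Reflexive A ∧ AntiSymmetric A ∧ Transitive A

/-- An element of `P^*`: an irreflexive, antisymmetric, transitive digraph. -/
def IsStrictPosetRel {V : Type} (A : V → V → Prop) : Prop :=
  Irreflexive A ∧ AntiSymmetric A ∧ Transitive A

/-- The direct (disjoint) sum of two digraphs. -/
def sumRel {V W : Type} (A : V → V → Prop) (B : W → W → Prop) :
    V ⊕ W → V ⊕ W → Prop
  | Sum.inl v, Sum.inl w => A v w
  | Sum.inr v, Sum.inr w => B v w
  | _, _ => False

/-- The open neighborhood `N(v)`. -/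
def Nbr {Z : Type} (A : Z → Z → Prop) (v : Z) : Set Z :=
  {w | w ≠ v ∧ (A v w ∨ A w v)}

/-- The in-neighborhood `N^in(v)`. -/
def NIn {Z : Type} (A : Z → Z → Prop) (v : Z) : Set Z :=
  {w | w ≠ v ∧ A w v}

/-- The out-neighborhood `N^out(v)`. -/
def NOut {Z : Type} (A : Z → Z → Prop) (v : Z) : Set Z :=
  {w | w ≠ v ∧ A v w}

/-- `A_r`: the arcs of `R` minus all arcs between `M` and `X`. -/
def ArRel {Z : Type} (A : Z → Z → Prop) (X M : Set Z) : Z → Z → Prop :=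
  fun v w => A v w ∧ ¬(v ∈ M ∧ w ∈ X) ∧ ¬(v ∈ X ∧ w ∈ M)

/-- `A_d = { m β(x) : m x ∈ A(R) ∩ (M × X) }`. -/
def AdRel {Z : Type} (A : Z → Z → Prop) (X M : Set Z) (β : Z → Z) : Z → Z → Prop :=
  fun v w => v ∈ M ∧ ∃ x ∈ X, A v x ∧ w = β x

/-- `A_u = { β(x) m : x m ∈ A(R) ∩ (X × M) }`. -/
def AuRel {Z : Type} (A : Z → Z → Prop) (X M : Set Z) (β : Z → Z) : Z → Z → Prop :=
  fun v w => w ∈ M ∧ ∃ x ∈ X, A x w ∧ v = β x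

/-- The rearranged digraph `S`, with `A(S) = A_r ∪ A_d ∪ A_u`. -/
def SRel {Z : Type} (A : Z → Z → Prop) (X M : Set Z) (β : Z → Z) : Z → Z → Prop :=
  fun v w => ArRel A X M v w ∨ AdRel A X M β v w ∨ AuRel A X M β v w

/-- `U_ξ = { v : ξ(v) ∈ T and ξ[N_G(v)] ∩ M ≠ ∅ }` (for `T = X`; with `T = Y`
this gives `U'_ζ`). -/
def USet {V Z : Type} (AG : V → V → Prop) (T M : Set Z) (ξ : V → Z) : Set V :=
  {v | ξ v ∈ T ∧ ∃ w ∈ Nbr AG v, ξ w ∈ M}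

open Classical in
/-- The rearranged homomorphism `ρ_G(ξ)`: `β(ξ(v))` on `U_ξ` and `ξ(v)` elsewhere. -/
noncomputable def rhoMap {V Z : Type} (AG : V → V → Prop) (X M : Set Z) (β : Z → Z)
    (ξ : V → Z) : V → Z :=
  fun v => if v ∈ USet AG X M ξ then β (ξ v) else ξ v

section Aux

variable {V W W' : Type}

/-- One-step connectivity relation inside `X`. -/
def connRel (A : V → V → Prop) (X : Set V) (a b : V) : Prop :=
  a ∈ X ∧ b ∈ X ∧ DAdj A a b

lemma dadj_symm {A : V → V → Prop} {a b : V} (h : DAdj A a b) : DAdj A b a :=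
  h.elim Or.inr Or.inl

lemma connIn_iff (A : V → V → Prop) (X : Set V) (v w : V) :
    ConnIn A X v w ↔ v ∈ X ∧ w ∈ X ∧ Relation.ReflTransGen (connRel A X) v w := by
  constructor
  · rintro ⟨I, z, h0, hI, hmem, hadj⟩
    subst h0; subst hI
    refine ⟨hmem 0 (Nat.zero_le _), hmem I le_rfl, ?_⟩
    have key : ∀ i ≤ I, Relation.ReflTransGen (connRel A X) (z 0) (z i) := by
      intro i
      induction i with
      | zero => intro _; exact .refl
      | succ n ih =>
        intro h
        exact (ih (Nat.le_of_succ_le h)).tail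
          ⟨hmem n (Nat.le_of_lt (Nat.lt_of_succ_le h)), hmem (n+1) h,
            hadj n (Nat.lt_of_succ_le h)⟩
    exact key I le_rfl
  · rintro ⟨hv, -, hr⟩
    induction hr with
    | refl =>
      exact ⟨0, fun _ => v, rfl, rfl, fun _ _ => hv, fun i h => absurd h (Nat.not_lt_zero i)⟩
    | @tail b c hvb hbc ih =>
      obtain ⟨I, z, h0, hI, hmem, hadj⟩ := ih
      refine ⟨I + 1, fun i => if i ≤ I then z i else c, by simp [h0], by simp, ?_, ?_⟩
      · intro i hi
        by_cases h : i ≤ I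
        · simpa [h] using hmem i h
        · simpa [h] using hbc.2.1
      · intro i hi
        rcases Nat.lt_or_ge i I with h | h
        · have h1 : i ≤ I := le_of_lt h
          have h2 : i + 1 ≤ I := h
          simpa [h1, h2] using hadj i h
        · have hiI : i = I := by omega
          have hni : ¬ (i + 1 ≤ I) := by omega
          have hii : i ≤ I := by omega
          simpa [hii, hni, hiI, hI] using hbc.2.2

lemma mem_gammaComp_self (A : V → V → Prop) (ξ : V → W) (v : V) :
    v ∈ GammaComp A ξ v := by
  rw [GammaComp, gammaSet, Set.mem_setOf_eq, connIn_iff]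
  exact ⟨rfl, rfl, .refl⟩

lemma xi_eq_of_mem {A : V → V → Prop} {ξ : V → W} {v w : V}
    (h : w ∈ GammaComp A ξ v) : ξ w = ξ v := by
  rw [GammaComp, gammaSet, Set.mem_setOf_eq, connIn_iff] at h
  exact h.2.1

lemma gammaComp_eq_of_mem {A : V → V → Prop} {ξ : V → W} {v w : V}
    (h : w ∈ GammaComp A ξ v) : GammaComp A ξ w = GammaComp A ξ v := by
  have hxw : ξ w = ξ v := xi_eq_of_mem h
  have hX : {u | ξ u = ξ w} = {u | ξ u = ξ v} := by ext u; simp [hxw]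
  rw [GammaComp, gammaSet, Set.mem_setOf_eq, connIn_iff] at h
  have hsym : Symmetric (connRel A {u | ξ u = ξ v}) :=
    fun a b hab => ⟨hab.2.1, hab.1, dadj_symm hab.2.2⟩
  ext u
  rw [GammaComp, GammaComp, gammaSet, gammaSet, Set.mem_setOf_eq, Set.mem_setOf_eq,
    connIn_iff, connIn_iff, hX]
  constructor
  · rintro ⟨h1, h2, h3⟩
    exact ⟨h.1, h2, h.2.2.trans h3⟩
  · rintro ⟨h1, h2, h3⟩
    exact ⟨h.2.1, h2, ((@Relation.ReflTransGen.stdSymm _ _ ⟨hsym⟩).symm _ _ h.2.2).trans h3⟩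

/-- Pointwise equality of components from equality of the partitions. -/
lemma theta_pointwise {A : V → V → Prop} {ξ : V → W} {ζ : V → W'}
    (h : {C : Set V | ∃ v, C = GammaComp A ζ v} = {C : Set V | ∃ v, C = GammaComp A ξ v})
    (v : V) : GammaComp A ζ v = GammaComp A ξ v := by
  have hmem : GammaComp A ζ v ∈ {C : Set V | ∃ u, C = GammaComp A ξ u} := by
    rw [← h]; exact ⟨v, rfl⟩
  obtain ⟨u, hu⟩ := hmem
  have hv : v ∈ GammaComp A ξ u := hu ▸ mem_gammaComp_self A ζ v
  rw [hu, ← gammaComp_eq_of_mem hv]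

/-- ζ is constant on its own components. -/
lemma zeta_const {A : V → V → Prop} {ζ : V → W'} {v w : V}
    (h : w ∈ GammaComp A ζ v) : ζ w = ζ v := xi_eq_of_mem h

/-- The components of `η ∘ π_ξ` coincide with those of `ξ`, for `η` a strict
homomorphism from `G_ξ`. -/
lemma strict_comp {A : V → V → Prop} {B' : W' → W' → Prop} {ξ : V → W}
    {η : GVert A ξ → W'} (hη : IsStrictHom (GArc A ξ) B' η) (v : V) :
    GammaComp A (fun u => η (piMap A ξ u)) v = GammaComp A ξ v := by
  set ζ : V → W' := fun u => η (piMap A ξ u) with hζ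
  have hconst : ∀ {a b : V}, b ∈ GammaComp A ξ a → ζ b = ζ a := by
    intro a b hb
    have : piMap A ξ b = piMap A ξ a := Subtype.ext (gammaComp_eq_of_mem hb)
    simp [hζ, this]
  apply Set.Subset.antisymm
  · intro w hw
    rw [GammaComp, gammaSet, Set.mem_setOf_eq, connIn_iff] at hw
    obtain ⟨-, -, hr⟩ := hw
    induction hr with
    | refl => exact mem_gammaComp_self A ξ v
    | @tail b c hvb hbc ih =>
      have hb : b ∈ GammaComp A ξ v := ih
      have hζbc : η (piMap A ξ b) = η (piMap A ξ c) := hbc.1.trans hbc.2.1.symm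
      have hπ : piMap A ξ b = piMap A ξ c := by
        rcases hbc.2.2 with h | h
        · by_contra hne
          exact hη.2 ⟨b, mem_gammaComp_self A ξ b, c, mem_gammaComp_self A ξ c, h⟩
            hne hζbc
        · by_contra hne
          exact hη.2 ⟨c, mem_gammaComp_self A ξ c, b, mem_gammaComp_self A ξ b, h⟩
            (Ne.symm hne) hζbc.symm
      have hcb : GammaComp A ξ b = GammaComp A ξ c := congrArg Subtype.val hπ
      have hc : c ∈ GammaComp A ξ b := hcb ▸ mem_gammaComp_self A ξ c
      exact (gammaComp_eq_of_mem hb) ▸ hc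
  · intro w hw
    have hζw : ζ w = ζ v := hconst hw
    rw [GammaComp, gammaSet, Set.mem_setOf_eq, connIn_iff] at hw ⊢
    obtain ⟨-, hwX, hr⟩ := hw
    refine ⟨rfl, hζw, ?_⟩
    clear hζw hwX
    induction hr with
    | refl => exact .refl
    | @tail b c hvb hbc ih =>
      have hb : b ∈ GammaComp A ξ v := by
        rw [GammaComp, gammaSet, Set.mem_setOf_eq, connIn_iff]
        exact ⟨rfl, hbc.1, hvb⟩
      have hc : c ∈ GammaComp A ξ v := by
        rw [GammaComp, gammaSet, Set.mem_setOf_eq, connIn_iff]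
        exact ⟨rfl, hbc.2.1, hvb.tail hbc⟩
      exact ih.tail ⟨hconst hb, hconst hc, hbc.2.2⟩

end Aux

/-- For a homomorphism `ξ : G → H` and every finite digraph `H'`:
`#Θ_{G,H'}(ξ) = #S(G_ξ, H')`. -/
theorem stmt5 {V W W' : Type} [Finite V] [Nonempty V] [Finite W] [Nonempty W]
    [Finite W'] [Nonempty W']
    (A : V → V → Prop) (B : W → W → Prop) (B' : W' → W' → Prop)
    (ξ : V → W) (hξ : IsHom A B ξ) :
    Nat.card ↥(ThetaSet A B' ξ) = Nat.card (StrictHomSet (GArc A ξ) B') := by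
  classical
  apply Nat.card_congr
  -- componentwise equality for Θ-members
  have hpt : ∀ (ζ : ↥(ThetaSet A B' ξ)) (v : V),
      GammaComp A ζ.1 v = GammaComp A ξ v := fun ζ v => theta_pointwise ζ.2.2 v
  refine
    { toFun := fun ζ => ⟨fun C => ζ.1 (C.2.choose), ?_, ?_⟩
      invFun := fun η => ⟨fun v => η.1 (piMap A ξ v), ?_, ?_⟩
      left_inv := ?_
      right_inv := ?_ }
  · -- homomorphism
    rintro C D ⟨a, ha, b, hb, hab⟩
    have hCa : a ∈ GammaComp A ξ C.2.choose := C.2.choose_spec ▸ ha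
    have hDb : b ∈ GammaComp A ξ D.2.choose := D.2.choose_spec ▸ hb
    have h1 : ζ.1 a = ζ.1 C.2.choose := zeta_const (hpt ζ C.2.choose ▸ hCa)
    have h2 : ζ.1 b = ζ.1 D.2.choose := zeta_const (hpt ζ D.2.choose ▸ hDb)
    have := ζ.2.1 hab
    rwa [h1, h2] at this
  · -- strictness
    rintro C D ⟨a, ha, b, hb, hab⟩ hne heq
    have hCa : a ∈ GammaComp A ξ C.2.choose := C.2.choose_spec ▸ ha
    have hDb : b ∈ GammaComp A ξ D.2.choose := D.2.choose_spec ▸ hb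
    have h1 : ζ.1 a = ζ.1 C.2.choose := zeta_const (hpt ζ C.2.choose ▸ hCa)
    have h2 : ζ.1 b = ζ.1 D.2.choose := zeta_const (hpt ζ D.2.choose ▸ hDb)
    replace heq : ζ.1 C.2.choose = ζ.1 D.2.choose := heq
    have hζab : ζ.1 b = ζ.1 a := by rw [h1, h2, heq]
    -- b belongs to the ζ-component of a, hence to C
    have hbζ : b ∈ GammaComp A ζ.1 a := by
      rw [GammaComp, gammaSet, Set.mem_setOf_eq, connIn_iff]
      exact ⟨rfl, hζab, .single ⟨rfl, hζab, Or.inl hab⟩⟩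
    have hbC : b ∈ GammaComp A ξ a := hpt ζ a ▸ hbζ
    have haC : GammaComp A ξ a = C.1 :=
      (gammaComp_eq_of_mem hCa).trans C.2.choose_spec.symm
    have hbD : GammaComp A ξ b = D.1 :=
      (gammaComp_eq_of_mem hDb).trans D.2.choose_spec.symm
    have hbC' : b ∈ C.1 := haC ▸ hbC
    have : C.1 = D.1 := by
      have hbC'' : b ∈ GammaComp A ξ C.2.choose := C.2.choose_spec ▸ hbC'
      have h3 : GammaComp A ξ b = C.1 :=
        (gammaComp_eq_of_mem hbC'').trans C.2.choose_spec.symm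
      exact h3.symm.trans hbD
    exact hne (Subtype.ext this)
  · -- invFun is a homomorphism
    intro v w hvw
    exact η.2.1 ⟨v, mem_gammaComp_self A ξ v, w, mem_gammaComp_self A ξ w, hvw⟩
  · -- invFun lands in ThetaSet: equality of partitions
    ext C
    simp only [Set.mem_setOf_eq]
    exact exists_congr fun v => by rw [strict_comp η.2 v]
  · -- left inverse
    intro ζ
    apply Subtype.ext
    funext v
    have hspec := (piMap A ξ v).2.choose_spec
    -- (piMap A ξ v).1 = GammaComp A ξ u for u the choice
    have hv : v ∈ GammaComp A ξ (piMap A ξ v).2.choose :=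
      hspec ▸ mem_gammaComp_self A ξ v
    exact (zeta_const (hpt ζ (piMap A ξ v).2.choose ▸ hv)).symm ▸ rfl
  · -- right inverse
    intro η
    apply Subtype.ext
    funext C
    have hspec := C.2.choose_spec
    have : piMap A ξ C.2.choose = C := Subtype.ext hspec.symm
    simp only [this]
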